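/- For every θ ∈ (0,1] and every x ∈ (0,1]: θ ≤ θ·(1−(1−x)^{1/θ})/x ≤ 1. Moreover the upper bound is attained for all x when θ = 1, and the lower bound is attained at x = 1. -/

import Mathlib

/-- Bounds on the oligopsony markdown: for `θ ∈ (0,1]` and `x ∈ (0,1]`,
`θ ≤ θ·(1−(1−x)^{1/θ})/x ≤ 1`; the upper bound is attained for all `x` when
`θ = 1`, and the lower bound is attained at `x = 1`. -/
theorem stmt6 (θ : ℝ) (hθ : θ ∈ Set.Ioc (0:ℝ) 1) :
    (∀ x ∈ Set.Ioc (0:ℝ) 1,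
      θ ≤ θ * (1 - (1 - x) ^ (1 / θ)) / x ∧ θ * (1 - (1 - x) ^ (1 / θ)) / x ≤ 1) ∧
    (θ = 1 → ∀ x ∈ Set.Ioc (0:ℝ) 1, θ * (1 - (1 - x) ^ (1 / θ)) / x = 1) ∧
    θ * (1 - (1 - (1:ℝ)) ^ (1 / θ)) / 1 = θ := by
  obtain ⟨hθ0, hθ1⟩ := hθ
  have hp : (1:ℝ) ≤ 1 / θ := (one_le_div hθ0).mpr hθ1
  refine ⟨?_, ?_, ?_⟩
  · rintro x ⟨hx0, hx1⟩
    constructor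
    · -- lower bound: (1-x)^(1/θ) ≤ 1-x
      have h : (1 - x) ^ (1 / θ) ≤ 1 - x := by
        rcases eq_or_lt_of_le hx1 with h1 | h1
        · subst h1
          simp only [sub_self]
          rw [Real.zero_rpow (one_div_ne_zero hθ0.ne')]
        · have hb0 : 0 < 1 - x := by linarith
          calc (1 - x) ^ (1 / θ) ≤ (1 - x) ^ (1:ℝ) :=
                Real.rpow_le_rpow_of_exponent_ge hb0 (by linarith) hp
            _ = 1 - x := Real.rpow_one _
      rw [le_div_iff₀ hx0]
      nlinarith [hθ0.le]
    · -- upper bound via Bernoulli: 1 - x/θ ≤ (1-x)^(1/θ)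
      have hbern : 1 + (1 / θ) * (-x) ≤ (1 + (-x)) ^ (1 / θ) :=
        one_add_mul_self_le_rpow_one_add (by linarith) hp
      rw [div_le_one hx0]
      have h2 := mul_le_mul_of_nonneg_left hbern hθ0.le
      have h3 : θ * (1 + 1 / θ * -x) = θ - x := by field_simp; ring
      rw [h3, show (1:ℝ) + -x = 1 - x from by ring] at h2
      nlinarith
  · rintro rfl x ⟨hx0, hx1⟩
    rw [show (1:ℝ)/1 = 1 by norm_num, Real.rpow_one]
    field_simp
    ring
  · rw [show (1:ℝ)-1 = 0 by norm_num, Real.zero_rpow (one_div_ne_zero hθ0.ne')]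
    ring
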